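/- Let B, C, D, K, P, Q be positive real numbers with C ≤ 1 and C P K / D < 1. If 8 B C^2 Q K^2 > (9D - CPK)√((D - CPK)(9D - CPK)) + 27 D^2 - 18 D C P K - C^2 P^2 K^2, then there exist exactly two pairs (U, V) with U > 0, V > 0 satisfying B U (1 - U/K) = P U V + Q U V^2 and C(P U V + Q U V^2) = D V, and these two equilibria (U_+, V_+), (U_-, V_-) satisfy U_+ < U_- < K. -/

import Mathlib

set_option maxHeartbeats 1000000


/-- For positive `B, C, D, K, P, Q` with `C ≤ 1` and `CPK/D < 1`,
if `8BC²QK² > (9D - CPK)√((D-CPK)(9D-CPK)) + 27D² - 18DCPK - C²P²K²`, then the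
non-scaled system has exactly two positive equilibria `(U₊, V₊), (U₋, V₋)`,
with `U₊ < U₋ < K`. -/
theorem two_positive_equilibria_nonscaled (B C D K P Q : ℝ)
    (hB : 0 < B) (hC : 0 < C) (hD : 0 < D) (hK : 0 < K) (hP : 0 < P) (hQ : 0 < Q)
    (hC1 : C ≤ 1) (hR0 : C * P * K / D < 1)
    (hcond : (9 * D - C * P * K) * Real.sqrt ((D - C * P * K) * (9 * D - C * P * K)) +
        27 * D ^ 2 - 18 * D * C * P * K - C ^ 2 * P ^ 2 * K ^ 2 <
      8 * B * C ^ 2 * Q * K ^ 2) :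
    ∃ Up Vp Um Vm : ℝ,
      (0 < Up ∧ 0 < Vp ∧
        B * Up * (1 - Up / K) = P * Up * Vp + Q * Up * Vp ^ 2 ∧
        C * (P * Up * Vp + Q * Up * Vp ^ 2) = D * Vp) ∧
      (0 < Um ∧ 0 < Vm ∧
        B * Um * (1 - Um / K) = P * Um * Vm + Q * Um * Vm ^ 2 ∧
        C * (P * Um * Vm + Q * Um * Vm ^ 2) = D * Vm) ∧
      Up < Um ∧ Um < K ∧
      ∀ U V : ℝ, 0 < U → 0 < V →
        B * U * (1 - U / K) = P * U * V + Q * U * V ^ 2 →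
        C * (P * U * V + Q * U * V ^ 2) = D * V →
        (U, V) = (Up, Vp) ∨ (U, V) = (Um, Vm) := by
  have hy : 0 < C * P * K := by positivity
  have hCPK : C * P * K < D := by
    rw [div_lt_one hD] at hR0; exact hR0
  set T : ℝ := Real.sqrt ((D - C * P * K) * (9 * D - C * P * K)) with hTdef
  have hT0 : 0 ≤ T := Real.sqrt_nonneg _
  have harg : (0:ℝ) ≤ (D - C * P * K) * (9 * D - C * P * K) :=
    mul_nonneg (by linarith) (by linarith)
  have hT2 : T ^ 2 = (D - C * P * K) * (9 * D - C * P * K) := Real.sq_sqrt harg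
  have hTlt : T < 3 * D := by nlinarith [hT2, hT0]
  have hTgt : 3 * (D - C * P * K) < T := by nlinarith [hT2, hT0]
  set F : ℝ → ℝ := fun U => B * C ^ 2 * Q * U ^ 2 * (K - U) + D * K * (C * P * U - D)
    with hFdef
  have hFcont : Continuous F := by fun_prop
  have hF0 : F 0 < 0 := by
    simp only [hFdef]; nlinarith [mul_pos (mul_pos hD hK) hD]
  have hFK : F K < 0 := by
    simp only [hFdef]; nlinarith [mul_pos (mul_pos hD hK) hD, mul_pos (mul_pos hD hK) hy]
  set U₀ : ℝ := K * (3 * D + C * P * K - T) / (4 * C * P * K) with hU₀def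
  have hU₀pos : 0 < U₀ := by
    apply div_pos; nlinarith; positivity
  have hU₀K : U₀ < K := by
    rw [div_lt_iff₀ (by positivity)]; nlinarith
  have hU₀mul : (4 * C * P * K) * U₀ = K * (3 * D + C * P * K - T) := by
    rw [hU₀def]; field_simp
  have hFU₀ : 0 < F U₀ := by
    have key : 8 * (4 * C * P * K) ^ 3 * F U₀ =
        K * (8 * B * C ^ 2 * Q * K ^ 2 -
          ((9 * D - C * P * K) * T + 27 * D ^ 2 - 18 * D * C * P * K
            - C ^ 2 * P ^ 2 * K ^ 2)) *
          (3 * D + C * P * K - T) ^ 2 * (4 * C * P * K - (3 * D + C * P * K - T)) := by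
      simp only [hFdef]
      linear_combination
        (8 * (-(B * C ^ 2 * Q) * ((4 * (C*P*K) * U₀) ^ 2
            + (4 * (C*P*K) * U₀) * (K * (3*D + C*P*K - T))
            + (K * (3*D + C*P*K - T)) ^ 2)
          + 4 * (B * C ^ 2 * Q) * K * (C*P*K) * ((4 * (C*P*K) * U₀)
            + K * (3*D + C*P*K - T))
          + 16 * D * (C*P*K) ^ 2 * K)
          + 128 * (C*P*K) ^ 2 * D * (C*P*K - K)) * hU₀mul
        + (K * ((9*D - C*P*K) * T ^ 2 - (54*D^2 + 2*(C*P*K)^2) * T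
            + 81*D^3 + 9*D^2*(C*P*K) - 29*D*(C*P*K)^2 + 3*(C*P*K)^3)) * hT2
    have hXpos : 0 < 8 * B * C ^ 2 * Q * K ^ 2 -
        ((9 * D - C * P * K) * T + 27 * D ^ 2 - 18 * D * C * P * K
          - C ^ 2 * P ^ 2 * K ^ 2) := by linarith
    have hNpos : 0 < 3 * D + C * P * K - T := by linarith
    have hMN : 0 < 4 * C * P * K - (3 * D + C * P * K - T) := by linarith
    have hR : 0 < K * (8 * B * C ^ 2 * Q * K ^ 2 -
          ((9 * D - C * P * K) * T + 27 * D ^ 2 - 18 * D * C * P * K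
            - C ^ 2 * P ^ 2 * K ^ 2)) *
          (3 * D + C * P * K - T) ^ 2 * (4 * C * P * K - (3 * D + C * P * K - T)) :=
      mul_pos (mul_pos (mul_pos hK hXpos) (pow_pos hNpos 2)) hMN
    have h8 : (0:ℝ) < 8 * (4 * C * P * K) ^ 3 := by positivity
    by_contra hcon
    push_neg at hcon
    have hle : 8 * (4 * C * P * K) ^ 3 * F U₀ ≤ 0 :=
      mul_nonpos_of_nonneg_of_nonpos (le_of_lt h8) hcon
    rw [key] at hle
    linarith
  obtain ⟨r1, hr1mem, hFr1⟩ :=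
    intermediate_value_Ioo (le_of_lt hU₀pos) hFcont.continuousOn ⟨hF0, hFU₀⟩
  obtain ⟨r2, hr2mem, hFr2⟩ :=
    intermediate_value_Ioo' (le_of_lt hU₀K) hFcont.continuousOn ⟨hFK, hFU₀⟩
  obtain ⟨hr1pos, hr1U₀⟩ := hr1mem
  obtain ⟨hU₀r2, hr2K⟩ := hr2mem
  have hr12 : r1 < r2 := lt_trans hr1U₀ hU₀r2
  have hr2pos : 0 < r2 := lt_trans hr1pos hr12
  have hr1K : r1 < K := lt_trans hr12 hr2K
  have hFr1' : B * C ^ 2 * Q * r1 ^ 2 * (K - r1) + D * K * (C * P * r1 - D) = 0 := by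
    simpa only [hFdef] using hFr1
  have hFr2' : B * C ^ 2 * Q * r2 ^ 2 * (K - r2) + D * K * (C * P * r2 - D) = 0 := by
    simpa only [hFdef] using hFr2
  -- factorization data
  have e1 : (D*K*C*P + B*C^2*Q*(K - r1 - r2)*(r1+r2) + B*C^2*Q*(r1*r2)) * r1
      + (-(D^2*K) - B*C^2*Q*(K - r1 - r2)*(r1*r2)) = 0 := by
    linear_combination hFr1'
  have e2 : (D*K*C*P + B*C^2*Q*(K - r1 - r2)*(r1+r2) + B*C^2*Q*(r1*r2)) * r2
      + (-(D^2*K) - B*C^2*Q*(K - r1 - r2)*(r1*r2)) = 0 := by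
    linear_combination hFr2'
  have hA0 : (D*K*C*P + B*C^2*Q*(K - r1 - r2)*(r1+r2) + B*C^2*Q*(r1*r2)) = 0 := by
    have h12 : (D*K*C*P + B*C^2*Q*(K - r1 - r2)*(r1+r2) + B*C^2*Q*(r1*r2)) * (r1 - r2)
        = 0 := by linear_combination e1 - e2
    rcases mul_eq_zero.mp h12 with h | h
    · exact h
    · exact absurd h (sub_ne_zero.mpr (ne_of_lt hr12))
  have hB0 : (-(D^2*K) - B*C^2*Q*(K - r1 - r2)*(r1*r2)) = 0 := by
    linear_combination e1 - r1 * hA0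
  have hs : B*C^2*Q*(K - r1 - r2) < 0 := by
    have hprod : r1 * r2 * (B*C^2*Q*(K - r1 - r2)) = -(D^2*K) := by
      linear_combination -hB0
    nlinarith [mul_pos hr1pos hr2pos, mul_pos (mul_pos hD hD) hK]
  -- positivity of the V-coordinates
  have hD1 : 0 < D - C * P * r1 := by
    nlinarith [hFr1', mul_pos (mul_pos (mul_pos hB (pow_pos hC 2)) hQ)
      (mul_pos (pow_pos hr1pos 2) (sub_pos.mpr hr1K)), mul_pos hD hK]
  have hD2 : 0 < D - C * P * r2 := by
    nlinarith [hFr2', mul_pos (mul_pos (mul_pos hB (pow_pos hC 2)) hQ)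
      (mul_pos (pow_pos hr2pos 2) (sub_pos.mpr hr2K)), mul_pos hD hK]
  set Vp : ℝ := (D - C * P * r1) / (C * Q * r1) with hVpdef
  set Vm : ℝ := (D - C * P * r2) / (C * Q * r2) with hVmdef
  have hVppos : 0 < Vp := div_pos hD1 (by positivity)
  have hVmpos : 0 < Vm := div_pos hD2 (by positivity)
  have hKne : (K:ℝ) ≠ 0 := ne_of_gt hK
  -- equilibrium equations at (r1, Vp)
  have hEq1p : B * r1 * (1 - r1 / K) = P * r1 * Vp + Q * r1 * Vp ^ 2 := by
    rw [hVpdef]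
    field_simp
    linear_combination hFr1'
  have hEq2p : C * (P * r1 * Vp + Q * r1 * Vp ^ 2) = D * Vp := by
    rw [hVpdef]
    field_simp
    ring
  have hEq1m : B * r2 * (1 - r2 / K) = P * r2 * Vm + Q * r2 * Vm ^ 2 := by
    rw [hVmdef]
    field_simp
    linear_combination hFr2'
  have hEq2m : C * (P * r2 * Vm + Q * r2 * Vm ^ 2) = D * Vm := by
    rw [hVmdef]
    field_simp
    ring
  refine ⟨r1, Vp, r2, Vm, ⟨hr1pos, hVppos, hEq1p, hEq2p⟩,
    ⟨hr2pos, hVmpos, hEq1m, hEq2m⟩, hr12, hr2K, ?_⟩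
  intro U V hU hV hE1 hE2
  have hVne : V ≠ 0 := ne_of_gt hV
  have hUne : U ≠ 0 := ne_of_gt hU
  have hA : C * U * (P + Q * V) = D := by
    apply mul_right_cancel₀ hVne
    linear_combination hE2
  have hE1' : B * U * (K - U) = K * (P * U * V + Q * U * V ^ 2) := by
    have h : B * U * (1 - U / K) * K = (P * U * V + Q * U * V ^ 2) * K := by
      rw [hE1]
    field_simp at h
    linear_combination U * h
  have hFU : B * C ^ 2 * Q * U ^ 2 * (K - U) + D * K * (C * P * U - D) = 0 := by
    linear_combination (C^2*Q*U) * hE1' + (K*(D + C*Q*U*V)) * hA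
  have hzero : (U - r1) * (U - r2)
      * (-(B*C^2*Q)*U + B*C^2*Q*(K - r1 - r2)) = 0 := by
    linear_combination hFU - U * hA0 - hB0
  have hlin : -(B*C^2*Q)*U + B*C^2*Q*(K - r1 - r2) < 0 := by
    linarith [hs, mul_pos (mul_pos (mul_pos hB (pow_pos hC 2)) hQ) hU]
  have hUU : U = r1 ∨ U = r2 := by
    rcases mul_eq_zero.mp hzero with h | h
    · rcases mul_eq_zero.mp h with h' | h'
      · exact Or.inl (by linarith [sub_eq_zero.mp h'])
      · exact Or.inr (by linarith [sub_eq_zero.mp h'])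
    · exact absurd h (ne_of_lt hlin)
  rcases hUU with h | h
  · left
    subst h
    have hVeq : V = Vp := by
      rw [hVpdef, eq_div_iff (by positivity)]
      linear_combination hA
    rw [hVeq]
  · right
    subst h
    have hVeq : V = Vm := by
      rw [hVmdef, eq_div_iff (by positivity)]
      linear_combination hA
    rw [hVeq]
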